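/- For all rational numbers p and t, if p²(1 + t²) = (2p² − 1)² then t = 0. (Consequently, an equilateral hyperbolic triangle with rational side lengths, or with rational angles, has no rational median/area bisector: taking p = cosh(a/2) in the rational-sides case, or p = sin(α/2) in the rational-angles case, and t = sinh(m) where m is the median, a rational median would yield a rational solution with t > 0.) -/

import Mathlib

lemma sq_mod8 (x : ℤ) : ∃ k, x^2 = 8*k ∨ x^2 = 8*k+1 ∨ x^2 = 8*k+4 := by
  have h : x % 4 = 0 ∨ x % 4 = 1 ∨ x % 4 = 2 ∨ x % 4 = 3 := by omega
  rcases h with h | h | h | h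
  · obtain ⟨m, hm⟩ : ∃ m, x = 4*m := ⟨x/4, by omega⟩
    exact ⟨2*m^2, Or.inl (by rw [hm]; ring)⟩
  · obtain ⟨m, hm⟩ : ∃ m, x = 4*m+1 := ⟨x/4, by omega⟩
    exact ⟨2*m^2+m, Or.inr (Or.inl (by rw [hm]; ring))⟩
  · obtain ⟨m, hm⟩ : ∃ m, x = 4*m+2 := ⟨x/4, by omega⟩
    exact ⟨2*m^2+2*m, Or.inr (Or.inr (by rw [hm]; ring))⟩
  · obtain ⟨m, hm⟩ : ∃ m, x = 4*m+3 := ⟨x/4, by omega⟩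
    exact ⟨2*m^2+3*m+1, Or.inr (Or.inl (by rw [hm]; ring))⟩

lemma odd_sq_mod8 (x : ℤ) (h : x % 2 = 1) : ∃ k, x^2 = 8*k+1 := by
  obtain ⟨m, hm⟩ : ∃ m, x = 2*m+1 := ⟨x/2, by omega⟩
  have h2 : Even (m*(m+1)) := Int.even_mul_succ_self m
  obtain ⟨j, hj⟩ := h2
  exact ⟨j, by rw [hm]; ring_nf; linear_combination 4*hj⟩

lemma even_sq (x : ℤ) (h : x % 2 = 0) : ∃ k, x^2 = 4*k := by
  obtain ⟨m, hm⟩ : ∃ m, x = 2*m := ⟨x/2, by omega⟩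
  exact ⟨m^2, by rw [hm]; ring⟩

lemma int_coprime_of (x y : ℤ)
    (H : ∀ q : ℕ, q.Prime → (q:ℤ) ∣ x → (q:ℤ) ∣ y → False) : IsCoprime x y := by
  rw [Int.isCoprime_iff_gcd_eq_one]
  by_contra hg
  obtain ⟨q, hq, hqd⟩ := Nat.exists_prime_and_dvd hg
  have h1 : (q:ℤ) ∣ x := dvd_trans (Int.natCast_dvd_natCast.mpr hqd) (Int.gcd_dvd_left x y)
  have h2 : (q:ℤ) ∣ y := dvd_trans (Int.natCast_dvd_natCast.mpr hqd) (Int.gcd_dvd_right x y)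
  exact H q hq h1 h2

lemma isCoprime_abs {x y : ℤ} (h : IsCoprime x y) : IsCoprime |x| |y| := by
  rw [Int.isCoprime_iff_gcd_eq_one] at *
  simpa [Int.gcd, Int.natAbs_abs] using h

lemma gauss_unit_cases {u : GaussianInt} (h : IsUnit u) :
    u = ⟨1,0⟩ ∨ u = ⟨-1,0⟩ ∨ u = ⟨0,1⟩ ∨ u = ⟨0,-1⟩ := by
  obtain ⟨v, hv⟩ := h.exists_right_inv
  have hn : u.norm * v.norm = 1 := by
    rw [← Zsqrtd.norm_mul, hv]; simp [Zsqrtd.norm]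
  have hun : u.norm = u.re*u.re + u.im*u.im := by simp [Zsqrtd.norm]
  have hvn : v.norm = v.re*v.re + v.im*v.im := by simp [Zsqrtd.norm]
  have hnu1 : u.norm = 1 := by
    have hd : u.norm ∣ 1 := ⟨v.norm, hn.symm⟩
    have hge : 0 ≤ u.norm := by rw [hun]; nlinarith [mul_self_nonneg u.re, mul_self_nonneg u.im]
    exact Int.eq_one_of_dvd_one hge hd
  have h1 : u.re*u.re + u.im*u.im = 1 := by rw [← hun]; exact hnu1
  have h2 : (u.re = 1 ∧ u.im = 0) ∨ (u.re = -1 ∧ u.im = 0) ∨ (u.re = 0 ∧ u.im = 1) ∨ (u.re = 0 ∧ u.im = -1) := by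
    have hr1 : u.re ≤ 1 := by nlinarith [mul_self_nonneg u.im]
    have hr2 : -1 ≤ u.re := by nlinarith [mul_self_nonneg u.im]
    have hi1 : u.im ≤ 1 := by nlinarith [mul_self_nonneg u.re]
    have hi2 : -1 ≤ u.im := by nlinarith [mul_self_nonneg u.re]
    interval_cases h : u.re <;> interval_cases h2 : u.im <;> simp_all
  rcases h2 with ⟨h3,h4⟩|⟨h3,h4⟩|⟨h3,h4⟩|⟨h3,h4⟩
  · exact Or.inl (by ext <;> simp [h3,h4])
  · exact Or.inr (Or.inl (by ext <;> simp [h3,h4]))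
  · exact Or.inr (Or.inr (Or.inl (by ext <;> simp [h3,h4])))
  · exact Or.inr (Or.inr (Or.inr (by ext <;> simp [h3,h4])))
lemma gauss_norm_eq_zero {g : GaussianInt} (h : g.norm = 0) : g = 0 := by
  have h2 : g.re * g.re + g.im * g.im = 0 := by
    simpa [Zsqrtd.norm] using h
  have hre : g.re = 0 := by nlinarith [mul_self_nonneg g.re, mul_self_nonneg g.im]
  have him : g.im = 0 := by nlinarith [mul_self_nonneg g.re, mul_self_nonneg g.im]
  ext <;> simp [hre, him]

lemma gauss_factor (α β : GaussianInt) (hα : α ≠ 0) (hn : α.norm = β.norm) :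
    ∃ γ δ u : GaussianInt, IsUnit u ∧ α = γ * δ ∧ β = γ * star δ * u := by
  classical
  set g := EuclideanDomain.gcd α β with hg
  set A := EuclideanDomain.gcdA α β with hA
  set B := EuclideanDomain.gcdB α β with hB
  obtain ⟨δ, hδ⟩ : g ∣ α := EuclideanDomain.gcd_dvd_left α β
  obtain ⟨ε, hε⟩ : g ∣ β := EuclideanDomain.gcd_dvd_right α β
  have hgne : g ≠ 0 := fun h0 => hα (by rw [hδ, h0, zero_mul])
  have hδne : δ ≠ 0 := fun h0 => hα (by rw [hδ, h0, mul_zero])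
  have hεne : ε ≠ 0 := by
    intro h0
    have : β = 0 := by rw [hε, h0, mul_zero]
    rw [this] at hn
    exact hα (gauss_norm_eq_zero (by simpa using hn))
  have hcop : IsCoprime δ ε := by
    have hb := EuclideanDomain.gcd_eq_gcd_ab α β
    rw [← hg, ← hA, ← hB] at hb
    rw [hδ, hε] at hb
    refine ⟨A, B, ?_⟩
    have h1 : g * 1 = g * (A * δ + B * ε) := by
      rw [mul_one]; nth_rewrite 1 [hb]; ring
    exact (mul_left_cancel₀ hgne h1).symm
  have hnδε : δ.norm = ε.norm := by
    rw [hδ, hε, Zsqrtd.norm_mul, Zsqrtd.norm_mul] at hn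
    have hgn : g.norm ≠ 0 := fun h0 => hgne (gauss_norm_eq_zero h0)
    exact mul_left_cancel₀ hgn hn
  have hmc : δ * star δ = ε * star ε := by
    rw [← Zsqrtd.norm_eq_mul_conj, ← Zsqrtd.norm_eq_mul_conj, hnδε]
  have hdvd : δ ∣ star ε := by
    have h1 : δ ∣ ε * star ε := ⟨star δ, hmc.symm⟩
    exact hcop.dvd_of_dvd_mul_left h1
  obtain ⟨t, ht⟩ := hdvd
  have hnt : t.norm = 1 := by
    have h1 : ε.norm = δ.norm * t.norm := by
      have : (star ε).norm = (δ * t).norm := by rw [ht]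
      rwa [Zsqrtd.norm_conj, Zsqrtd.norm_mul] at this
    have hδn : δ.norm ≠ 0 := fun h0 => hδne (gauss_norm_eq_zero h0)
    have h2 : δ.norm * 1 = δ.norm * t.norm := by
      rw [mul_one]
      calc δ.norm = ε.norm := hnδε
        _ = δ.norm * t.norm := h1
    exact (mul_left_cancel₀ hδn h2).symm
  have htue : t * star t = 1 := by
    have := Zsqrtd.norm_eq_mul_conj t
    rw [hnt] at this
    simpa using this.symm
  refine ⟨g, δ, star t, IsUnit.of_mul_eq_one (a := star t) t (by rw [mul_comm] at htue ⊢; linear_combination htue), hδ, ?_⟩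
  have hε' : ε = star δ * star t := by
    have := congrArg star ht
    rw [star_star, star_mul] at this
    rw [this]; ring
  rw [hε, hε']; ring
-- coprimality of x*y with x^2 - y^2
lemma coprime_mul_sq_sub {x y : ℤ} (h : IsCoprime x y) :
    IsCoprime (x*y) (x^2 - y^2) := by
  have hx : IsCoprime x (x^2 - y^2) := by
    have h1 : IsCoprime x (-(y*y)) := (h.mul_right h).neg_right
    have h2 : IsCoprime x (-(y*y) + x*x) := h1.add_mul_left_right x
    have h3 : -(y*y) + x*x = x^2 - y^2 := by ring
    rwa [h3] at h2
  have hy : IsCoprime y (x^2 - y^2) := by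
    have h1 : IsCoprime y (x*x) := (h.symm.mul_right h.symm)
    have h2 : IsCoprime y (x*x + y*(-y)) := h1.add_mul_left_right (-y)
    have h3 : x*x + y*(-y) = x^2 - y^2 := by ring
    rwa [h3] at h2
  exact hx.mul_left hy

lemma shape_lemma (c d e f b : ℤ)
    (hcd : IsCoprime c d) (hef : IsCoprime e f)
    (hfact : (c^2+d^2)*(e^2+f^2) = b)
    (hbo : b % 2 = 1)
    (hrel : c*d*(e^2-f^2) = -(3*(e*f*(c^2-d^2))))
    (hne : e*f*(c^2-d^2) ≠ 0) :
    ∃ X Z S W : ℤ, 0 < X ∧ 0 < Z ∧ X % 2 = 1 ∧ IsCoprime X Z ∧ 0 < S ∧ 0 < W ∧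
      X^2 + Z^2 = S^2 ∧ X^2 + 9*Z^2 = W^2 ∧ 5*W ≤ 3*b := by
  have hef0 : e*f ≠ 0 := fun h0 => hne (by rw [h0]; ring)
  have he0 : e ≠ 0 := fun h0 => hef0 (by rw [h0]; ring)
  have hf0 : f ≠ 0 := fun h0 => hef0 (by rw [h0]; ring)
  have hP0 : c^2 - d^2 ≠ 0 := fun h0 => hne (by rw [h0]; ring)
  have hcd0 : c*d ≠ 0 := by
    intro h0
    apply hne
    have h1 : -(3*(e*f*(c^2-d^2))) = 0 := by rw [← hrel, h0]; ring
    linarith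
  have hQ0 : e^2 - f^2 ≠ 0 := by
    intro h0
    apply hne
    have h1 : -(3*(e*f*(c^2-d^2))) = 0 := by rw [← hrel, h0]; ring
    linarith
  -- parity : e^2+f^2 and c^2+d^2 odd
  have hefodd : (e^2+f^2) % 2 = 1 := by
    rcases (by omega : (e^2+f^2) % 2 = 0 ∨ (e^2+f^2) % 2 = 1) with h | h
    · exfalso
      obtain ⟨w, hw⟩ : ∃ w, e^2+f^2 = 2*w := ⟨(e^2+f^2)/2, by omega⟩
      have : b = 2*((c^2+d^2)*w) := by rw [← hfact, hw]; ring
      omega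
    · exact h
  have hcdodd : (c^2+d^2) % 2 = 1 := by
    rcases (by omega : (c^2+d^2) % 2 = 0 ∨ (c^2+d^2) % 2 = 1) with h | h
    · exfalso
      obtain ⟨w, hw⟩ : ∃ w, c^2+d^2 = 2*w := ⟨(c^2+d^2)/2, by omega⟩
      have : b = 2*(w*(e^2+f^2)) := by rw [← hfact, hw]; ring
      omega
    · exact h
  have hQodd : (e^2 - f^2) % 2 = 1 := by omega
  -- e^2+f^2 ≥ 5  and  c^2+d^2 ≥ 5
  have hef5 : 5 ≤ e^2 + f^2 := by
    rcases (by omega : e % 2 = 0 ∨ e % 2 = 1) with hp | hp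
    · obtain ⟨w, hw⟩ : ∃ w, e = 2*w := ⟨e/2, by omega⟩
      have hw0 : w ≠ 0 := fun h0 => he0 (by rw [hw, h0]; ring)
      have h1 : 1 ≤ w^2 := by
        rcases lt_trichotomy w 0 with h|h|h
        · nlinarith
        · exact absurd h hw0
        · nlinarith
      have h2 : 1 ≤ f^2 := by
        rcases lt_trichotomy f 0 with h|h|h
        · nlinarith
        · exact absurd h hf0
        · nlinarith
      have : e^2 = 4*w^2 := by rw [hw]; ring
      omega
    ·
      have hfp : f % 2 = 0 := by
        rcases (by omega : f % 2 = 0 ∨ f % 2 = 1) with h | h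
        · exact h
        · exfalso
          obtain ⟨k1, hk1⟩ := odd_sq_mod8 e hp
          obtain ⟨k2, hk2⟩ := odd_sq_mod8 f h
          omega
      obtain ⟨w, hw⟩ : ∃ w, f = 2*w := ⟨f/2, by omega⟩
      have hw0 : w ≠ 0 := fun h0 => hf0 (by rw [hw, h0]; ring)
      have h1 : 1 ≤ w^2 := by
        rcases lt_trichotomy w 0 with h|h|h
        · nlinarith
        · exact absurd h hw0
        · nlinarith
      have h2 : 1 ≤ e^2 := by
        rcases lt_trichotomy e 0 with h|h|h
        · nlinarith
        · exact absurd h he0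
        · nlinarith
      have : f^2 = 4*w^2 := by rw [hw]; ring
      omega
  have hc0 : c ≠ 0 := fun h0 => hcd0 (by rw [h0]; ring)
  have hd0 : d ≠ 0 := fun h0 => hcd0 (by rw [h0]; ring)
  have hcd5 : 5 ≤ c^2 + d^2 := by
    rcases (by omega : c % 2 = 0 ∨ c % 2 = 1) with hp | hp
    · obtain ⟨w, hw⟩ : ∃ w, c = 2*w := ⟨c/2, by omega⟩
      have hw0 : w ≠ 0 := fun h0 => hc0 (by rw [hw, h0]; ring)
      have h1 : 1 ≤ w^2 := by
        rcases lt_trichotomy w 0 with h|h|h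
        · nlinarith
        · exact absurd h hw0
        · nlinarith
      have h2 : 1 ≤ d^2 := by
        rcases lt_trichotomy d 0 with h|h|h
        · nlinarith
        · exact absurd h hd0
        · nlinarith
      have : c^2 = 4*w^2 := by rw [hw]; ring
      omega
    · have hfp : d % 2 = 0 := by
        rcases (by omega : d % 2 = 0 ∨ d % 2 = 1) with h | h
        · exact h
        · exfalso
          obtain ⟨k1, hk1⟩ := odd_sq_mod8 c hp
          obtain ⟨k2, hk2⟩ := odd_sq_mod8 d h
          omega
      obtain ⟨w, hw⟩ : ∃ w, d = 2*w := ⟨d/2, by omega⟩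
      have hw0 : w ≠ 0 := fun h0 => hd0 (by rw [hw, h0]; ring)
      have h1 : 1 ≤ w^2 := by
        rcases lt_trichotomy w 0 with h|h|h
        · nlinarith
        · exact absurd h hw0
        · nlinarith
      have h2 : 1 ≤ c^2 := by
        rcases lt_trichotomy c 0 with h|h|h
        · nlinarith
        · exact absurd h hc0
        · nlinarith
      have : d^2 = 4*w^2 := by rw [hw]; ring
      omega
  -- divisibility chain
  have hcopQ : IsCoprime (e*f) (e^2 - f^2) := coprime_mul_sq_sub hef
  have hcopP : IsCoprime (c*d) (c^2 - d^2) := coprime_mul_sq_sub hcd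
  have hdvd1 : e*f ∣ c*d := by
    refine hcopQ.dvd_of_dvd_mul_right ⟨-(3*(c^2-d^2)), by linear_combination hrel⟩
  have hdvd2 : c*d ∣ 3*(e*f) := by
    refine hcopP.dvd_of_dvd_mul_right (⟨-(e^2-f^2), by linear_combination hrel⟩ :
      c*d ∣ (3*(e*f)) * (c^2-d^2))
  obtain ⟨k, hk⟩ := hdvd1
  have hk3 : k ∣ 3 := by
    obtain ⟨w, hw⟩ := hdvd2
    refine ⟨w, ?_⟩
    rw [hk] at hw
    have h0 : (e*f) * (3 - k*w) = 0 := by linear_combination hw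
    rcases mul_eq_zero.mp h0 with h | h
    · exact absurd h hef0
    · linarith
  have hkvals : k = 1 ∨ k = -1 ∨ k = 3 ∨ k = -3 := by
    have h1 : k.natAbs ∣ 3 := by
      have := Int.natAbs_dvd_natAbs.mpr hk3
      simpa using this
    have h2 : k.natAbs ≤ 3 := Nat.le_of_dvd (by norm_num) h1
    interval_cases h : k.natAbs
    · simp at h1
    · omega
    · exfalso; revert h1; decide
    · omega
  -- uniform pieces
  have hXpos : 0 < |e^2-f^2| := abs_pos.mpr hQ0
  have hZne : 2*(e*f) ≠ 0 := mul_ne_zero two_ne_zero hef0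
  have hZpos : 0 < |2*(e*f)| := abs_pos.mpr hZne
  have hXodd : |e^2-f^2| % 2 = 1 := by
    rcases abs_cases (e^2-f^2) with ⟨h,_⟩|⟨h,_⟩ <;> omega
  have hXZcop : IsCoprime |e^2-f^2| |2*(e*f)| := by
    apply isCoprime_abs
    have h2 : IsCoprime (e^2-f^2) 2 := by
      obtain ⟨j, hj⟩ : ∃ j, e^2-f^2 = 2*j+1 := ⟨(e^2-f^2)/2, by omega⟩
      exact ⟨1, -j, by linarith⟩
    exact h2.mul_right hcopQ.symm
  have habsX : |e^2-f^2|^2 = (e^2-f^2)^2 := sq_abs _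
  have habsZ : |2*(e*f)|^2 = (2*(e*f))^2 := sq_abs _
  have hSeq : |e^2-f^2|^2 + |2*(e*f)|^2 = (e^2+f^2)^2 := by rw [habsX, habsZ]; ring
  have hSpos : (0:ℤ) < e^2+f^2 := by omega
  have hWpos1 : (0:ℤ) < 3*(c^2+d^2) := by omega
  have hWpos2 : (0:ℤ) < c^2+d^2 := by omega
  rcases hkvals with hk1 | hk1 | hk1 | hk1
  · -- k = 1 : c*d = e*f
    subst hk1
    rw [mul_one] at hk
    have hsq : e^2*f^2 = c^2*d^2 := by linear_combination (-(c*d) - e*f)*hk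
    have h0 : e*f*((e^2-f^2) + 3*(c^2-d^2)) = 0 := by
      linear_combination hrel - (e^2-f^2)*hk
    have hQrel : (e^2-f^2)^2 = 9*(c^2-d^2)^2 := by
      rcases mul_eq_zero.mp h0 with h | h
      · exact absurd h hef0
      · have : e^2-f^2 = -(3*(c^2-d^2)) := by linarith
        rw [this]; ring
    refine ⟨|e^2-f^2|, |2*(e*f)|, e^2+f^2, 3*(c^2+d^2),
      hXpos, hZpos, hXodd, hXZcop, hSpos, hWpos1, hSeq, ?_, ?_⟩
    · rw [habsX, habsZ]; linear_combination hQrel + 36*hsq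
    · have key : (c^2+d^2)*5 ≤ (c^2+d^2)*(e^2+f^2) :=
        mul_le_mul_of_nonneg_left hef5 (by positivity)
      linarith [key, hfact]
  · -- k = -1 : c*d = -(e*f)
    subst hk1
    have hk' : c*d = -(e*f) := by linarith [hk]
    have hsq : e^2*f^2 = c^2*d^2 := by linear_combination (-(c*d) + e*f)*hk'
    have h0 : e*f*((e^2-f^2) - 3*(c^2-d^2)) = 0 := by
      linear_combination -hrel + (e^2-f^2)*hk'
    have hQrel : (e^2-f^2)^2 = 9*(c^2-d^2)^2 := by
      rcases mul_eq_zero.mp h0 with h | h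
      · exact absurd h hef0
      · have : e^2-f^2 = 3*(c^2-d^2) := by linarith
        rw [this]; ring
    refine ⟨|e^2-f^2|, |2*(e*f)|, e^2+f^2, 3*(c^2+d^2),
      hXpos, hZpos, hXodd, hXZcop, hSpos, hWpos1, hSeq, ?_, ?_⟩
    · rw [habsX, habsZ]; linear_combination hQrel + 36*hsq
    · have key : (c^2+d^2)*5 ≤ (c^2+d^2)*(e^2+f^2) :=
        mul_le_mul_of_nonneg_left hef5 (by positivity)
      linarith [key, hfact]
  · -- k = 3 : c*d = 3*(e*f)
    subst hk1
    have hk' : c*d = 3*(e*f) := by linarith [hk]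
    have hsq : c^2*d^2 = 9*(e^2*f^2) := by linear_combination (c*d + 3*(e*f))*hk'
    have h0 : e*f*(3*(e^2-f^2) + 3*(c^2-d^2)) = 0 := by
      linear_combination hrel - (e^2-f^2)*hk'
    have hQrel : (e^2-f^2)^2 = (c^2-d^2)^2 := by
      rcases mul_eq_zero.mp h0 with h | h
      · exact absurd h hef0
      · have : e^2-f^2 = -(c^2-d^2) := by linarith
        rw [this]; ring
    refine ⟨|e^2-f^2|, |2*(e*f)|, e^2+f^2, c^2+d^2,
      hXpos, hZpos, hXodd, hXZcop, hSpos, hWpos2, hSeq, ?_, ?_⟩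
    · rw [habsX, habsZ]; linear_combination hQrel - 4*hsq
    · have key : (c^2+d^2)*5 ≤ (c^2+d^2)*(e^2+f^2) :=
        mul_le_mul_of_nonneg_left hef5 (by positivity)
      linarith [key, hfact]
  · -- k = -3 : c*d = -(3*(e*f))
    subst hk1
    have hk' : c*d = -(3*(e*f)) := by linarith [hk]
    have hsq : c^2*d^2 = 9*(e^2*f^2) := by linear_combination (c*d - 3*(e*f))*hk'
    have h0 : e*f*(3*(e^2-f^2) - 3*(c^2-d^2)) = 0 := by
      linear_combination -hrel + (e^2-f^2)*hk'
    have hQrel : (e^2-f^2)^2 = (c^2-d^2)^2 := by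
      rcases mul_eq_zero.mp h0 with h | h
      · exact absurd h hef0
      · have : e^2-f^2 = c^2-d^2 := by linarith
        rw [this]
    refine ⟨|e^2-f^2|, |2*(e*f)|, e^2+f^2, c^2+d^2,
      hXpos, hZpos, hXodd, hXZcop, hSpos, hWpos2, hSeq, ?_, ?_⟩
    · rw [habsX, habsZ]; linear_combination hQrel - 4*hsq
    · have key : (c^2+d^2)*5 ≤ (c^2+d^2)*(e^2+f^2) :=
        mul_le_mul_of_nonneg_left hef5 (by positivity)
      linarith [key, hfact]
lemma Tstep (X Z S W : ℤ) (hX : 0 < X) (hZ : 0 < Z) (hXodd : X % 2 = 1)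
    (hcop : IsCoprime X Z) (hS : 0 < S) (hW : 0 < W)
    (h1 : X^2 + Z^2 = S^2) (h2 : X^2 + 9*Z^2 = W^2) :
    ∃ u v : ℤ, 0 < u ∧ 0 < v ∧ IsCoprime u v ∧
      (u^2 - v^2) * (4*u^2 - v^2) = X^2 ∧ 2*u^2 + v^2 = W := by
  obtain ⟨kX, hkX⟩ := odd_sq_mod8 X hXodd
  have hZe : Z % 2 = 0 := by
    rcases (by omega : Z % 2 = 0 ∨ Z % 2 = 1) with h | h
    · exact h
    · exfalso
      obtain ⟨kZ, hkZ⟩ := odd_sq_mod8 Z h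
      obtain ⟨kS, hkS⟩ := sq_mod8 S
      omega
  obtain ⟨kZ, hkZ⟩ := even_sq Z hZe
  have hSo : S % 2 = 1 := by
    rcases (by omega : S % 2 = 0 ∨ S % 2 = 1) with h | h
    · exfalso; obtain ⟨kS, hkS⟩ := even_sq S h; omega
    · exact h
  have hWo : W % 2 = 1 := by
    rcases (by omega : W % 2 = 0 ∨ W % 2 = 1) with h | h
    · exfalso; obtain ⟨kW, hkW⟩ := even_sq W h; omega
    · exact h
  have hWS : S < W := by nlinarith
  obtain ⟨w1, hw1⟩ : ∃ w1, W - S = 2*w1 := ⟨(W-S)/2, by omega⟩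
  obtain ⟨w2, hw2⟩ : ∃ w2, W + S = 2*w2 := ⟨(W+S)/2, by omega⟩
  have eW : W = w1 + w2 := by omega
  have eS : S = w2 - w1 := by omega
  subst eW eS
  have hw12 : w1 * w2 = 2*Z^2 := by
    have h4 : 4*(w1*w2) = 4*(2*Z^2) := by linear_combination h1 - h2
    linarith
  have hw1pos : 1 ≤ w1 := by omega
  have hw2pos : 1 ≤ w2 := by omega
  have hcw : IsCoprime w1 w2 := by
    apply int_coprime_of
    intro q hq hq1 hq2
    have hqW : (q:ℤ) ∣ w1 + w2 := dvd_add hq1 hq2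
    have hqS : (q:ℤ) ∣ w2 - w1 := dvd_sub hq2 hq1
    have hq2' : q ≠ 2 := by
      intro h2'
      subst h2'
      obtain ⟨c, hc⟩ := hqW
      omega
    have hqint : Prime (q:ℤ) := Nat.prime_iff_prime_int.mp hq
    have hqZ : (q:ℤ) ∣ Z := by
      have hd : (q:ℤ) ∣ 2*Z^2 := hw12 ▸ Dvd.dvd.mul_right hq1 w2
      rcases hqint.dvd_mul.mp hd with h | h
      · exfalso
        have hd2 : q ∣ 2 := by exact_mod_cast h
        have := Nat.le_of_dvd (by norm_num) hd2
        have := hq.two_le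
        omega
      · exact hqint.dvd_of_dvd_pow h
    have hqX : (q:ℤ) ∣ X := by
      have key : 9*(w2-w1)^2 - (w1+w2)^2 = 8*X^2 := by linear_combination h2 - 9*h1
      have hd : (q:ℤ) ∣ 8*X^2 := by
        rw [← key]
        exact dvd_sub (Dvd.dvd.mul_left (Dvd.dvd.pow hqS (by norm_num)) 9)
          (Dvd.dvd.pow hqW (by norm_num))
      rcases hqint.dvd_mul.mp hd with h | h
      · exfalso
        have hdd : (q:ℤ) ∣ 2 := hqint.dvd_of_dvd_pow (show (q:ℤ) ∣ 2^3 by norm_num at h ⊢; exact h)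
        have hd2 : q ∣ 2 := by exact_mod_cast hdd
        have := Nat.le_of_dvd (by norm_num) hd2
        have := hq.two_le
        omega
      · exact hqint.dvd_of_dvd_pow h
    obtain ⟨x0, y0, hxy⟩ := hcop
    exact hqint.not_dvd_one (hxy ▸ dvd_add (Dvd.dvd.mul_left hqX x0) (Dvd.dvd.mul_left hqZ y0))
  -- one of w1, w2 is even
  rcases (by omega : w1 % 2 = 0 ∨ w2 % 2 = 0) with hpe | hpe
  · obtain ⟨w1', hw1'⟩ : ∃ w1', w1 = 2*w1' := ⟨w1/2, by omega⟩
    have hprod : w1' * w2 = Z^2 := by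
      have : 2*(w1'*w2) = 2*Z^2 := by rw [hw1'] at hw12; linarith [hw12]
      linarith
    have hcw' : IsCoprime w1' w2 := hcw.of_isCoprime_of_dvd_left ⟨2, by linarith [hw1']⟩
    obtain ⟨u0, hu0⟩ := Int.sq_of_isCoprime hcw' hprod
    obtain ⟨v0, hv0⟩ := Int.sq_of_isCoprime hcw'.symm (by rw [mul_comm]; exact hprod)
    have hu0' : w1' = u0^2 := by
      rcases hu0 with h | h
      · exact h
      · exfalso; nlinarith [sq_nonneg u0]
    have hv0' : w2 = v0^2 := by
      rcases hv0 with h | h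
      · exact h
      · exfalso; nlinarith [sq_nonneg v0]
    refine ⟨|u0|, |v0|, ?_, ?_, ?_, ?_, ?_⟩
    · rcases abs_pos.mpr (show u0 ≠ 0 by intro h0; rw [h0] at hu0'; simp at hu0'; omega) with h; exact h
    · rcases abs_pos.mpr (show v0 ≠ 0 by intro h0; rw [h0] at hv0'; simp at hv0'; omega) with h; exact h
    · apply isCoprime_abs
      have hc2 : IsCoprime (u0^2) (v0^2) := by rwa [hu0', hv0'] at hcw'
      exact ((IsCoprime.pow_left_iff two_pos).mp ((IsCoprime.pow_right_iff two_pos).mp hc2))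
    · have hZ2 : Z^2 = |u0|^2 * |v0|^2 := by rw [sq_abs, sq_abs, ← hu0', ← hv0']; exact hprod.symm
      have h1' : X^2 + Z^2 = (|v0|^2 - 2*|u0|^2)^2 := by
        rw [sq_abs, sq_abs, ← hu0', ← hv0']
        have : w2 - w1 = w2 - 2*w1' := by omega
        rw [← this]; exact h1
      linear_combination -h1' + hZ2
    · rw [sq_abs, sq_abs, ← hu0', ← hv0']; omega
  · obtain ⟨w2', hw2'⟩ : ∃ w2', w2 = 2*w2' := ⟨w2/2, by omega⟩
    have hprod : w2' * w1 = Z^2 := by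
      have : 2*(w2'*w1) = 2*Z^2 := by rw [hw2'] at hw12; linarith [hw12]
      linarith
    have hcw' : IsCoprime w2' w1 := (hcw.symm).of_isCoprime_of_dvd_left ⟨2, by linarith [hw2']⟩
    obtain ⟨u0, hu0⟩ := Int.sq_of_isCoprime hcw' hprod
    obtain ⟨v0, hv0⟩ := Int.sq_of_isCoprime hcw'.symm (by rw [mul_comm]; exact hprod)
    have hu0' : w2' = u0^2 := by
      rcases hu0 with h | h
      · exact h
      · exfalso; nlinarith [sq_nonneg u0]
    have hv0' : w1 = v0^2 := by
      rcases hv0 with h | h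
      · exact h
      · exfalso; nlinarith [sq_nonneg v0]
    refine ⟨|u0|, |v0|, ?_, ?_, ?_, ?_, ?_⟩
    · exact abs_pos.mpr (show u0 ≠ 0 by intro h0; rw [h0] at hu0'; simp at hu0'; omega)
    · exact abs_pos.mpr (show v0 ≠ 0 by intro h0; rw [h0] at hv0'; simp at hv0'; omega)
    · apply isCoprime_abs
      have hc2 : IsCoprime (u0^2) (v0^2) := by rwa [hu0', hv0'] at hcw'
      exact ((IsCoprime.pow_left_iff two_pos).mp ((IsCoprime.pow_right_iff two_pos).mp hc2))
    · have hZ2 : Z^2 = |u0|^2 * |v0|^2 := by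
        rw [sq_abs, sq_abs, ← hu0', ← hv0']
        exact hprod.symm
      have h1' : X^2 + Z^2 = (2*|u0|^2 - |v0|^2)^2 := by
        rw [sq_abs, sq_abs, ← hu0', ← hv0']
        have : (w2 - w1) = 2*w2' - w1 := by omega
        rw [show (2*w2' - w1)^2 = (w2-w1)^2 by rw [this]]
        exact h1
      linear_combination -h1' + hZ2
    · rw [sq_abs, sq_abs, ← hu0', ← hv0']; omega
set_option maxHeartbeats 1000000 in
lemma iplus (μ : ℕ)
    (ih : ∀ m < μ, ∀ (a b N : ℤ), 0 < a → 0 < b → IsCoprime a b →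
        (a^2-b^2)*(4*a^2-b^2) = N^2 → (4*a^2+b^2).toNat ≤ m → N = 0)
    (a b r s : ℤ) (ha : 0 < a) (hb : 0 < b) (hcop : IsCoprime a b)
    (hμ : (4*a^2+b^2).toNat ≤ μ) (hbo : b % 2 = 1)
    (hr : a^2-b^2 = -r^2) (hs : 4*a^2-b^2 = -s^2) : False := by
  obtain ⟨kb, hkb⟩ := odd_sq_mod8 b hbo
  have hb2r : b^2 = a^2 + r^2 := by linarith
  have hb2s : b^2 = 4*a^2 + s^2 := by linarith
  have hae : a % 2 = 0 := by
    rcases (by omega : a % 2 = 0 ∨ a % 2 = 1) with h | h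
    · exact h
    · exfalso
      obtain ⟨ka, hka⟩ := odd_sq_mod8 a h
      obtain ⟨ks, hks⟩ := sq_mod8 s
      omega
  have hso : s % 2 = 1 := by
    rcases (by omega : s % 2 = 0 ∨ s % 2 = 1) with h | h
    · exfalso
      obtain ⟨ks, hks⟩ := even_sq s h
      obtain ⟨ka, hka⟩ := even_sq a hae
      omega
    · exact h
  have hb3 : 3 ≤ b := by
    have ha1 : 1 ≤ a^2 := by
      have : 0 < a^2 := by positivity
      omega
    have hb4 : 4 ≤ b^2 := by linarith [sq_nonneg s]
    rcases (by omega : b ≤ 1 ∨ 2 ≤ b) with h | h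
    · have hb1 : b = 1 := by omega
      rw [hb1] at hb4
      norm_num at hb4
    · omega
  -- first Pythagorean triple  a² + r² = b²
  have hpt1 : PythagoreanTriple a r b := by
    have h : a*a + r*r = b*b := by linear_combination -hb2r
    exact h
  have hgcd1 : Int.gcd a r = 1 := by
    rw [← Int.isCoprime_iff_gcd_eq_one]
    apply int_coprime_of
    intro q hq hq1 hq2
    have hqp : Prime (q:ℤ) := Nat.prime_iff_prime_int.mp hq
    have hqb : (q:ℤ) ∣ b := by
      apply hqp.dvd_of_dvd_pow (n := 2)
      rw [hb2r]
      exact dvd_add (dvd_pow hq1 two_ne_zero) (dvd_pow hq2 two_ne_zero)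
    obtain ⟨x, y, hxy⟩ := hcop
    exact hqp.not_dvd_one (hxy ▸ dvd_add (hq1.mul_left x) (hqb.mul_left y))
  obtain ⟨m, n, hmn1, hmn2, hmn3, hmn4⟩ := PythagoreanTriple.coprime_classification.mp ⟨hpt1, hgcd1⟩
  have hodd_diff : ∀ x y : ℤ, (x % 2 = 0 ∧ y % 2 = 1 ∨ x % 2 = 1 ∧ y % 2 = 0) →
      (x^2 - y^2) % 2 = 1 := by
    intro x y hxy
    rcases hxy with ⟨h1,h2⟩ | ⟨h1,h2⟩
    · obtain ⟨k1, hk1⟩ := even_sq x h1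
      obtain ⟨k2, hk2⟩ := odd_sq_mod8 y h2
      omega
    · obtain ⟨k1, hk1⟩ := odd_sq_mod8 x h1
      obtain ⟨k2, hk2⟩ := even_sq y h2
      omega
  have hamn : a = 2*m*n := by
    rcases hmn1 with ⟨h1, h2⟩ | ⟨h1, h2⟩
    · exfalso
      have hd := hodd_diff m n hmn4
      rw [← h1] at hd
      omega
    · exact h1
  have hbmn : b = m^2 + n^2 := by
    rcases hmn2 with h | h
    · exact h
    · exfalso; linarith [sq_nonneg m, sq_nonneg n]
  -- second Pythagorean triple  (2a)² + s² = b²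
  have hpt2 : PythagoreanTriple (2*a) s b := by
    have h : (2*a)*(2*a) + s*s = b*b := by linear_combination -hb2s
    exact h
  have hgcd2 : Int.gcd (2*a) s = 1 := by
    rw [← Int.isCoprime_iff_gcd_eq_one]
    apply int_coprime_of
    intro q hq hq1 hq2
    have hqp : Prime (q:ℤ) := Nat.prime_iff_prime_int.mp hq
    have hq2' : q ≠ 2 := by
      intro h2'; subst h2'
      have h2d : (2:ℤ) ∣ s := by exact_mod_cast hq2
      obtain ⟨w, hw⟩ := h2d
      omega
    have hqa : (q:ℤ) ∣ a := by
      rcases hqp.dvd_mul.mp hq1 with h | h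
      · exfalso
        have hd2 : q ∣ 2 := by exact_mod_cast h
        have := Nat.le_of_dvd (by norm_num) hd2
        have := hq.two_le
        omega
      · exact h
    have hqb : (q:ℤ) ∣ b := by
      apply hqp.dvd_of_dvd_pow (n := 2)
      rw [hb2s]
      exact dvd_add (Dvd.dvd.mul_left (dvd_pow hqa two_ne_zero) 4) (dvd_pow hq2 two_ne_zero)
    obtain ⟨x, y, hxy⟩ := hcop
    exact hqp.not_dvd_one (hxy ▸ dvd_add (hqa.mul_left x) (hqb.mul_left y))
  obtain ⟨M, N1, hMN1, hMN2, hMN3, hMN4⟩ := PythagoreanTriple.coprime_classification.mp ⟨hpt2, hgcd2⟩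
  have haMN : a = M*N1 := by
    rcases hMN1 with ⟨h1, h2⟩ | ⟨h1, h2⟩
    · exfalso
      have hd := hodd_diff M N1 hMN4
      rw [← h1] at hd
      omega
    · linarith
  have hbMN : b = M^2 + N1^2 := by
    rcases hMN2 with h | h
    · exact h
    · exfalso; linarith [sq_nonneg M, sq_nonneg N1]
  -- Gaussian integers
  have hmncop : IsCoprime m n := Int.isCoprime_iff_gcd_eq_one.mpr hmn3
  have hmn0 : 0 < m*n := by linarith [hamn]
  set α : GaussianInt := ⟨m, n⟩ with hαdef
  set β : GaussianInt := ⟨M, N1⟩ with hβdef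
  have hnα : α.norm = b := by rw [hbmn]; simp [Zsqrtd.norm]; ring
  have hnβ : β.norm = b := by rw [hbMN]; simp [Zsqrtd.norm]; ring
  have hαne : α ≠ 0 := by
    intro h0
    have h1 : α.norm = 0 := by rw [h0]; simp [Zsqrtd.norm]
    rw [hnα] at h1
    omega
  obtain ⟨γ, δ, u, hu, hαeq, hβeq⟩ := gauss_factor α β hαne (by rw [hnα, hnβ])
  have hm_eq : m = γ.re*δ.re - γ.im*δ.im := by
    have h0 := congrArg Zsqrtd.re hαeq
    simp [Zsqrtd.re_mul] at h0
    linarith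
  have hn_eq : n = γ.re*δ.im + γ.im*δ.re := by
    have h0 := congrArg Zsqrtd.im hαeq
    simp [Zsqrtd.im_mul] at h0
    linarith
  have hbfact : (γ.re^2 + γ.im^2) * (δ.re^2 + δ.im^2) = b := by
    have h0 : α.norm = γ.norm * δ.norm := by rw [hαeq, Zsqrtd.norm_mul]
    rw [hnα] at h0
    simp [Zsqrtd.norm] at h0
    linear_combination -h0
  have hcdcop : IsCoprime γ.re γ.im := by
    obtain ⟨x, y, hxy⟩ := hmncop
    exact ⟨x*δ.re + y*δ.im, -(x*δ.im) + y*δ.re,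
      by linear_combination hxy - x*hm_eq - y*hn_eq⟩
  have hefcop : IsCoprime δ.re δ.im := by
    obtain ⟨x, y, hxy⟩ := hmncop
    exact ⟨x*γ.re + y*γ.im, -(x*γ.im) + y*γ.re,
      by linear_combination hxy - x*hm_eq - y*hn_eq⟩
  have hMN' : M*N1 = 2*(m*n) := by rw [← haMN, hamn]; ring
  have hmn_expr : m*n = γ.re*γ.im*(δ.re^2-δ.im^2) + δ.re*δ.im*(γ.re^2-γ.im^2) := by
    rw [hm_eq, hn_eq]; ring
  -- helper applying the construction
  have main_step : ∀ X Z S W : ℤ, 0 < X → 0 < Z → X % 2 = 1 → IsCoprime X Z →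
      0 < S → 0 < W → X^2 + Z^2 = S^2 → X^2 + 9*Z^2 = W^2 → 5*W ≤ 3*b → False := by
    intro X Z S W hX hZ hXo hXZ hS hW h1 h2 hbound
    obtain ⟨u', v', hu', hv', hcopuv, heqv, hWuv⟩ := Tstep X Z S W hX hZ hXo hXZ hS hW h1 h2
    have hbb : 3*b ≤ b^2 := by
      have key : (0:ℤ) ≤ (b-3)*b := mul_nonneg (by linarith) (by linarith)
      have key2 : (b-3)*b = b^2 - 3*b := by ring
      linarith
    have ha2 : (0:ℤ) < a^2 := by positivity
    have hineq : 4*u'^2 + v'^2 < 4*a^2 + b^2 := by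
      have h5 : 5*(4*u'^2 + v'^2) ≤ 10*W := by
        have := sq_nonneg v'
        linarith [hWuv]
      linarith [hbound, hbb, ha2, hb3]
    have hmeas : (4*u'^2+v'^2).toNat < μ := by
      have h2' : (0:ℤ) ≤ 4*u'^2+v'^2 := by positivity
      have h3' : (0:ℤ) ≤ 4*a^2+b^2 := by positivity
      omega
    have hXzero := ih _ hmeas u' v' X hu' hv' hcopuv heqv le_rfl
    omega
  rcases gauss_unit_cases hu with hu1 | hu1 | hu1 | hu1 <;> subst hu1
  · -- u = 1
    have hM_eq : M = γ.re*δ.re + γ.im*δ.im := by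
      have h0 := congrArg Zsqrtd.re hβeq
      simp [Zsqrtd.re_mul, Zsqrtd.im_mul] at h0
      linarith
    have hN_eq : N1 = γ.im*δ.re - γ.re*δ.im := by
      have h0 := congrArg Zsqrtd.im hβeq
      simp [Zsqrtd.re_mul, Zsqrtd.im_mul] at h0
      linarith
    rw [hM_eq, hN_eq] at hMN'
    have hrelA : γ.re*γ.im*(δ.re^2-δ.im^2) = -(3*(δ.re*δ.im*(γ.re^2-γ.im^2))) := by
      linear_combination -hMN' - 2*hmn_expr
    have hmn_val : m*n = -(2*(δ.re*δ.im*(γ.re^2-γ.im^2))) := by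
      linear_combination hmn_expr + hrelA
    have hne : δ.re*δ.im*(γ.re^2-γ.im^2) ≠ 0 := by
      intro h0
      rw [h0] at hmn_val
      simp at hmn_val
      omega
    obtain ⟨X, Z, S, W, hX, hZ, hXo, hXZ, hS, hW, h1, h2, hbound⟩ :=
      shape_lemma γ.re γ.im δ.re δ.im b hcdcop hefcop hbfact hbo hrelA hne
    exact main_step X Z S W hX hZ hXo hXZ hS hW h1 h2 hbound
  · -- u = -1
    have hM_eq : M = -(γ.re*δ.re + γ.im*δ.im) := by
      have h0 := congrArg Zsqrtd.re hβeq
      simp [Zsqrtd.re_mul, Zsqrtd.im_mul] at h0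
      linarith
    have hN_eq : N1 = -(γ.im*δ.re - γ.re*δ.im) := by
      have h0 := congrArg Zsqrtd.im hβeq
      simp [Zsqrtd.re_mul, Zsqrtd.im_mul] at h0
      linarith
    rw [hM_eq, hN_eq] at hMN'
    have hrelA : γ.re*γ.im*(δ.re^2-δ.im^2) = -(3*(δ.re*δ.im*(γ.re^2-γ.im^2))) := by
      linear_combination -hMN' - 2*hmn_expr
    have hmn_val : m*n = -(2*(δ.re*δ.im*(γ.re^2-γ.im^2))) := by
      linear_combination hmn_expr + hrelA
    have hne : δ.re*δ.im*(γ.re^2-γ.im^2) ≠ 0 := by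
      intro h0
      rw [h0] at hmn_val
      simp at hmn_val
      omega
    obtain ⟨X, Z, S, W, hX, hZ, hXo, hXZ, hS, hW, h1, h2, hbound⟩ :=
      shape_lemma γ.re γ.im δ.re δ.im b hcdcop hefcop hbfact hbo hrelA hne
    exact main_step X Z S W hX hZ hXo hXZ hS hW h1 h2 hbound
  · -- u = i
    have hM_eq : M = -(γ.im*δ.re - γ.re*δ.im) := by
      have h0 := congrArg Zsqrtd.re hβeq
      simp [Zsqrtd.re_mul, Zsqrtd.im_mul] at h0
      linarith
    have hN_eq : N1 = γ.re*δ.re + γ.im*δ.im := by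
      have h0 := congrArg Zsqrtd.im hβeq
      simp [Zsqrtd.re_mul, Zsqrtd.im_mul] at h0
      linarith
    rw [hM_eq, hN_eq] at hMN'
    have hrelB : δ.re*δ.im*(γ.re^2-γ.im^2) = -(3*(γ.re*γ.im*(δ.re^2-δ.im^2))) := by
      linear_combination -hMN' - 2*hmn_expr
    have hmn_val : m*n = -(2*(γ.re*γ.im*(δ.re^2-δ.im^2))) := by
      linear_combination hmn_expr + hrelB
    have hne : γ.re*γ.im*(δ.re^2-δ.im^2) ≠ 0 := by
      intro h0
      rw [h0] at hmn_val
      simp at hmn_val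
      omega
    obtain ⟨X, Z, S, W, hX, hZ, hXo, hXZ, hS, hW, h1, h2, hbound⟩ :=
      shape_lemma δ.re δ.im γ.re γ.im b hefcop hcdcop (by linear_combination hbfact) hbo hrelB hne
    exact main_step X Z S W hX hZ hXo hXZ hS hW h1 h2 hbound
  · -- u = -i
    have hM_eq : M = γ.im*δ.re - γ.re*δ.im := by
      have h0 := congrArg Zsqrtd.re hβeq
      simp [Zsqrtd.re_mul, Zsqrtd.im_mul] at h0
      linarith
    have hN_eq : N1 = -(γ.re*δ.re + γ.im*δ.im) := by
      have h0 := congrArg Zsqrtd.im hβeq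
      simp [Zsqrtd.re_mul, Zsqrtd.im_mul] at h0
      linarith
    rw [hM_eq, hN_eq] at hMN'
    have hrelB : δ.re*δ.im*(γ.re^2-γ.im^2) = -(3*(γ.re*γ.im*(δ.re^2-δ.im^2))) := by
      linear_combination -hMN' - 2*hmn_expr
    have hmn_val : m*n = -(2*(γ.re*γ.im*(δ.re^2-δ.im^2))) := by
      linear_combination hmn_expr + hrelB
    have hne : γ.re*γ.im*(δ.re^2-δ.im^2) ≠ 0 := by
      intro h0
      rw [h0] at hmn_val
      simp at hmn_val
      omega
    obtain ⟨X, Z, S, W, hX, hZ, hXo, hXZ, hS, hW, h1, h2, hbound⟩ :=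
      shape_lemma δ.re δ.im γ.re γ.im b hefcop hcdcop (by linear_combination hbfact) hbo hrelB hne
    exact main_step X Z S W hX hZ hXo hXZ hS hW h1 h2 hbound
lemma descent : ∀ (μ : ℕ) (a b N : ℤ), 0 < a → 0 < b → IsCoprime a b →
    (a^2 - b^2) * (4*a^2 - b^2) = N^2 → (4*a^2 + b^2).toNat ≤ μ → N = 0 := by
  intro μ
  induction μ using Nat.strong_induction_on with
  | _ μ ih =>
  intro a b N ha hb hcop heq hμ
  rcases (by omega : b % 2 = 0 ∨ b % 2 = 1) with hbe | hbo
  · -- b even : reduce to (b/2, a)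
    obtain ⟨c, hc⟩ : ∃ c, b = 2*c := ⟨b/2, by omega⟩
    have hcpos : 0 < c := by omega
    have hN4 : N^2 = 4*((c^2 - a^2)*(4*c^2 - a^2)) := by
      rw [hc] at heq; linear_combination -heq
    have h2N : (2:ℤ) ∣ N := by
      refine Int.prime_two.dvd_of_dvd_pow (n := 2) ⟨2*((c^2-a^2)*(4*c^2-a^2)), by linarith⟩
    obtain ⟨N0, hN0⟩ := h2N
    have heq' : (c^2 - a^2)*(4*c^2 - a^2) = N0^2 := by
      have h4 : 4*((c^2-a^2)*(4*c^2-a^2)) = 4*N0^2 := by rw [← hN4, hN0]; ring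
      linarith
    have hca : IsCoprime c a := (hcop.of_isCoprime_of_dvd_right ⟨2, by omega⟩).symm
    have hmeas : (4*c^2 + a^2).toNat < μ := by
      have hb2c : b^2 = 4*c^2 := by rw [hc]; ring
      have h1 : 4*c^2 + a^2 < 4*a^2 + b^2 := by nlinarith
      have h2 : (0:ℤ) ≤ 4*c^2 + a^2 := by positivity
      have h3 : (0:ℤ) ≤ 4*a^2 + b^2 := by positivity
      omega
    have := ih ((4*c^2+a^2).toNat) hmeas c a N0 hcpos ha hca heq' le_rfl
    omega
  · -- b odd
    by_contra hN0
    have hNsq : 0 < N^2 := by positivity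
    obtain ⟨kb, hkb⟩ := odd_sq_mod8 b hbo
    rcases (em ((3:ℤ) ∣ (a^2 - b^2))) with h3 | h3
    · -- case II : 3 divides both factors
      obtain ⟨A', hA'⟩ := h3
      have h9 : 9*(A'*(A' + a^2)) = N^2 := by
        have hB : 4*a^2 - b^2 = 3*(A' + a^2) := by linear_combination hA'
        rw [← heq, hA', hB]; ring
      have h3N : (3:ℤ) ∣ N := by
        refine Int.prime_three.dvd_of_dvd_pow (n := 2) ⟨3*(A'*(A'+a^2)), by linarith⟩
      obtain ⟨N1, hN1⟩ := h3N
      have heq2 : A'*(A'+a^2) = N1^2 := by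
        have : 9*(A'*(A'+a^2)) = 9*N1^2 := by rw [h9, hN1]; ring
        linarith
      have hN1ne : N1 ≠ 0 := by intro h0; rw [h0] at hN1; simp at hN1; exact hN0 hN1
      have hcop2 : IsCoprime (a^2) (b^2) := hcop.pow
      have hcopA'B' : IsCoprime A' (A' + a^2) := by
        obtain ⟨x, y, hxy⟩ := hcop2
        refine ⟨-x - 4*y, x + y, ?_⟩
        linear_combination hxy + y*hA'
      obtain ⟨r, hr⟩ := Int.sq_of_isCoprime hcopA'B' heq2
      obtain ⟨s, hs⟩ := Int.sq_of_isCoprime hcopA'B'.symm (by rw [mul_comm]; exact heq2)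
      have hN1sq : 0 < N1^2 := by positivity
      rcases hr with hr | hr <;> rcases hs with hs | hs
      · -- II.minus : A' = r^2, B' = s^2  (a > b side) → descent
        have hrne : r ≠ 0 := by
          intro h0
          rw [h0] at hr; simp at hr
          rw [hr] at heq2; simp at heq2
          exact hN1ne ((pow_eq_zero_iff two_ne_zero).mp heq2.symm)
        have hsne : s ≠ 0 := by
          intro h0
          rw [h0] at hs; simp at hs
          rw [hs] at heq2; simp at heq2
          exact hN1ne ((pow_eq_zero_iff two_ne_zero).mp heq2.symm)
        have ha2 : a^2 = s^2 - r^2 := by rw [← hs, ← hr]; ring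
        have hb2 : b^2 = s^2 - 4*r^2 := by linear_combination -hA' + hs - 4*hr
        have heq3 : (|r|^2 - |s|^2) * (4*|r|^2 - |s|^2) = (a*b)^2 := by
          rw [sq_abs, sq_abs]
          have h1 : r^2 - s^2 = -(a^2) := by linarith
          have h2 : 4*r^2 - s^2 = -(b^2) := by linarith
          rw [h1, h2]; ring
        have hcoprs : IsCoprime |r| |s| := by
          apply isCoprime_abs
          have h1 : IsCoprime (r^2) (s^2) := by rwa [hs, hr] at hcopA'B'
          exact (IsCoprime.pow_left_iff two_pos).mp ((IsCoprime.pow_right_iff two_pos).mp h1)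
        have hmeas : (4*|r|^2 + |s|^2).toNat < μ := by
          have h1 : 4*|r|^2 + |s|^2 < 4*a^2 + b^2 := by
            rw [sq_abs, sq_abs]
            nlinarith [hr, hs, hA', ha, hb]
          have h2 : (0:ℤ) ≤ 4*|r|^2 + |s|^2 := by positivity
          have h3 : (0:ℤ) ≤ 4*a^2 + b^2 := by positivity
          omega
        have habs : |r| > 0 := abs_pos.mpr hrne
        have hsabs : |s| > 0 := abs_pos.mpr hsne
        have := ih ((4*|r|^2+|s|^2).toNat) hmeas |r| |s| (a*b) habs hsabs hcoprs heq3 le_rfl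
        nlinarith [this, mul_pos ha hb]
      · -- A' = r^2, B' = -s^2 : product ≤ 0, contradiction
        rw [hs, hr] at heq2
        nlinarith [sq_nonneg (r*s), hN1sq, heq2]
      · -- A' = -r^2, B' = s^2 : product ≤ 0
        rw [hs, hr] at heq2
        nlinarith [sq_nonneg (r*s), hN1sq, heq2]
      · -- II.plus : A' = -r^2, B' = -s^2 : kill mod 8 : s^2 + b^2 = 4 r^2
        have hkey : s^2 + b^2 = 4*r^2 := by
          have h2 : b^2 = (A'+a^2) - 4*A' := by linear_combination -hA'
          rw [hs, hr] at h2
          linarith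
        obtain ⟨ks, hks⟩ := sq_mod8 s
        obtain ⟨kr, hkr⟩ := sq_mod8 r
        omega
    · -- case I : factors coprime
      have hcopAB : IsCoprime (a^2 - b^2) (4*a^2 - b^2) := by
        apply int_coprime_of
        intro q hq hq1 hq2
        have h3a : (q:ℤ) ∣ 3*a^2 := by
          have : 3*a^2 = (4*a^2-b^2) - (a^2-b^2) := by ring
          rw [this]; exact dvd_sub hq2 hq1
        have h3b : (q:ℤ) ∣ 3*b^2 := by
          have : 3*b^2 = (4*a^2-b^2) - 4*(a^2-b^2) := by ring
          rw [this]; exact dvd_sub hq2 (Dvd.dvd.mul_left hq1 4)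
        obtain ⟨x, y, hxy⟩ := hcop.pow (m := 2) (n := 2)
        have hq3 : (q:ℤ) ∣ 3 := by
          have : (3:ℤ) = x*(3*a^2) + y*(3*b^2) := by linear_combination 3*hxy.symm
          rw [this]; exact dvd_add (Dvd.dvd.mul_left h3a x) (Dvd.dvd.mul_left h3b y)
        have hq3' : q ∣ 3 := by exact_mod_cast hq3
        have : q = 3 := by
          have := Nat.le_of_dvd (by norm_num) hq3'
          have := hq.two_le
          interval_cases q
          · exfalso; revert hq3'; norm_num
          · rfl
        subst this
        exact h3 hq1
      obtain ⟨r, hr⟩ := Int.sq_of_isCoprime hcopAB heq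
      obtain ⟨s, hs⟩ := Int.sq_of_isCoprime hcopAB.symm (by rw [mul_comm]; exact heq)
      rcases hr with hr | hr <;> rcases hs with hs | hs
      · -- I.minus : a^2-b^2 = r^2, 4a^2-b^2 = s^2 : kill by parity
        rcases (by omega : a % 2 = 0 ∨ a % 2 = 1) with hae | hao
        · obtain ⟨ka, hka⟩ := even_sq a hae
          obtain ⟨kr, hkr⟩ := sq_mod8 r
          omega
        · obtain ⟨ka, hka⟩ := odd_sq_mod8 a hao
          obtain ⟨ks, hks⟩ := sq_mod8 s
          omega
      · rw [hr, hs] at heq; nlinarith [sq_nonneg (r*s), hNsq, heq]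
      · rw [hr, hs] at heq; nlinarith [sq_nonneg (r*s), hNsq, heq]
      · -- I.plus : b^2 = a^2 + r^2, b^2 = 4a^2 + s^2 : the hard Gaussian descent
        exact iplus μ ih a b r s ha hb hcop hμ hbo hr hs
/-- for all rationals `p, t`, if `p²(1 + t²) = (2p² − 1)²` then
`t = 0`; consequently an equilateral hyperbolic triangle with rational side
lengths or rational angles has no rational median/area bisector. -/
theorem no_rational_median_equilateral (p t : ℚ)
    (h : p ^ 2 * (1 + t ^ 2) = (2 * p ^ 2 - 1) ^ 2) :
    t = 0 := by
  by_cases hp : p = 0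
  · exfalso
    rw [hp] at h
    norm_num at h
  · have ha0 : p.num ≠ 0 := Rat.num_ne_zero.mpr hp
    have hb0 : (0:ℤ) < (p.den : ℤ) := by exact_mod_cast p.pos
    have hd0 : (0:ℤ) < (t.den : ℤ) := by exact_mod_cast t.pos
    have hbQ : ((p.den : ℤ) : ℚ) ≠ 0 := by positivity
    have hdQ : ((t.den : ℤ) : ℚ) ≠ 0 := by positivity
    have key : ((p.num:ℚ))^2*(((t.den:ℚ))^2+((t.num:ℚ))^2)*(((p.den:ℚ))^2)^2
        = (2*((p.num:ℚ))^2-((p.den:ℚ))^2)^2*(((p.den:ℚ))^2*((t.den:ℚ))^2) := by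
      rw [← Rat.num_div_den p, ← Rat.num_div_den t] at h
      field_simp at h
      linear_combination ((p.den:ℚ))^2 * h
    have keyZ : p.num^2*((t.den:ℤ)^2+t.num^2)*(((p.den:ℤ))^2)^2
        = (2*p.num^2-(p.den:ℤ)^2)^2*((p.den:ℤ)^2*(t.den:ℤ)^2) := by exact_mod_cast key
    have hbne2 : ((p.den:ℤ))^2 ≠ 0 := by positivity
    have key2 : (p.num*(p.den:ℤ)*t.num)^2
        = (t.den:ℤ)^2*((p.num^2-(p.den:ℤ)^2)*(4*p.num^2-(p.den:ℤ)^2)) := by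
      have key2' : (p.den:ℤ)^2 * ((p.num*(p.den:ℤ)*t.num)^2)
          = (p.den:ℤ)^2 * ((t.den:ℤ)^2*((p.num^2-(p.den:ℤ)^2)*(4*p.num^2-(p.den:ℤ)^2))) := by
        linear_combination keyZ
      exact mul_left_cancel₀ hbne2 key2'
    have hdvd : (t.den:ℤ) ∣ p.num*(p.den:ℤ)*t.num := by
      have h2 : (t.den:ℤ)^2 ∣ (p.num*(p.den:ℤ)*t.num)^2 :=
        ⟨(p.num^2-(p.den:ℤ)^2)*(4*p.num^2-(p.den:ℤ)^2), by linear_combination key2⟩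
      exact (Int.pow_dvd_pow_iff two_ne_zero).mp h2
    obtain ⟨N, hN⟩ := hdvd
    have hdne : ((t.den:ℤ))^2 ≠ 0 := by positivity
    have heqN : (|p.num|^2-(p.den:ℤ)^2)*(4*|p.num|^2-(p.den:ℤ)^2) = N^2 := by
      rw [sq_abs]
      have h3 : (t.den:ℤ)^2*((p.num^2-(p.den:ℤ)^2)*(4*p.num^2-(p.den:ℤ)^2))
          = (t.den:ℤ)^2*(N^2) := by
        rw [← key2, hN]; ring
      exact mul_left_cancel₀ hdne h3
    have hcop : IsCoprime |p.num| ((p.den:ℤ)) := by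
      rw [Int.isCoprime_iff_gcd_eq_one]
      have := p.reduced
      simpa [Int.gcd, Int.natAbs_abs] using this
    have habs : 0 < |p.num| := abs_pos.mpr ha0
    have hNzero := descent ((4*|p.num|^2+(p.den:ℤ)^2).toNat) |p.num| ((p.den:ℤ)) N
      habs hb0 hcop heqN le_rfl
    rw [hNzero, mul_zero] at hN
    have hc0 : t.num = 0 := by
      rcases mul_eq_zero.mp hN with h | h
      · rcases mul_eq_zero.mp h with h | h
        · exact absurd h ha0
        · exact absurd h (by omega)
      · exact h
    exact Rat.num_eq_zero.mp hc0
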